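/- Let T be the n×n lower-triangular indicator matrix (T_{ij} = 1 if i ≥ j, 0 otherwise), let A ∈ ℝ^{n×n} have rows of norm at most ‖A‖, and let W = (2AA^T)∘T - diag(‖A_1‖²,…,‖A_n‖²) be the strictly-adjusted lower-triangular part satisfying W + W^T = 2AA^T. Assuming the triangular truncation bound ‖M∘T‖ ≤ K_n ‖M‖ with K_n ≤ (log n)/π + 1 + 1/π for n ≥ 2, one has ‖W‖ ≤ (2 K_n)‖A‖² + ‖A‖ = O((log n)‖A‖²). -/

import Mathlib

open Matrix
open scoped Matrix.Norms.L2Operator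

open scoped RealInnerProductSpace in
/-- A symmetric continuous linear map whose quadratic form is bounded by `c‖x‖²`
has operator norm at most `c`. -/
lemma aux_selfAdjoint_norm_le {E : Type*} [NormedAddCommGroup E] [InnerProductSpace ℝ E]
    (f : E →L[ℝ] E) (hsym : ∀ x y : E, ⟪f x, y⟫ = ⟪x, f y⟫) {c : ℝ} (hc : 0 ≤ c)
    (hq : ∀ x : E, |⟪f x, x⟫| ≤ c * ‖x‖ ^ 2) : ‖f‖ ≤ c := by
  apply ContinuousLinearMap.opNorm_le_of_unit_norm hc
  intro x hx
  by_cases hfx : f x = 0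
  · simp [hfx, hc]
  · set y : E := ‖f x‖⁻¹ • f x with hy
    have hfxpos : (0:ℝ) < ‖f x‖ := norm_pos_iff.mpr hfx
    have hny : ‖y‖ = 1 := by
      rw [hy, norm_smul, norm_inv, norm_norm, inv_mul_cancel₀ hfxpos.ne']
    have hinner : ⟪f x, y⟫ = ‖f x‖ := by
      rw [hy, real_inner_smul_right, real_inner_self_eq_norm_sq, sq,
        inv_mul_cancel_left₀ hfxpos.ne']
    have hsymxy : ⟪f y, x⟫ = ⟪f x, y⟫ := by
      rw [hsym y x, real_inner_comm]
    have hpol : ⟪f (x + y), x + y⟫ - ⟪f (x - y), x - y⟫ = 4 * ⟪f x, y⟫ := by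
      simp only [map_add, map_sub, inner_add_left, inner_add_right, inner_sub_left,
        inner_sub_right]
      linarith [hsymxy]
    have hpar : ‖x + y‖ ^ 2 + ‖x - y‖ ^ 2 = 2 * (‖x‖ ^ 2 + ‖y‖ ^ 2) := by
      have := parallelogram_law_with_norm ℝ x y
      nlinarith [this]
    have h3 := abs_le.mp (hq (x + y))
    have h4 := abs_le.mp (hq (x - y))
    have hkey : 4 * ‖f x‖ ≤ c * ‖x + y‖ ^ 2 + c * ‖x - y‖ ^ 2 := by
      rw [← hinner, ← hpol]; linarith [h3.2, h4.1]
    have : c * ‖x + y‖ ^ 2 + c * ‖x - y‖ ^ 2 = c * (‖x + y‖ ^ 2 + ‖x - y‖ ^ 2) := by ring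
    rw [this, hpar, hx, hny] at hkey
    linarith

open scoped RealInnerProductSpace in
/-- with `T` the lower-triangular indicator matrix,
`W = (2AAᵀ)∘T - diag(‖A₁‖²,…,‖A_n‖²)` (so that `W + Wᵀ = 2AAᵀ`), and assuming
the triangular truncation bound `‖M∘T‖ ≤ K_n‖M‖` with
`K_n ≤ (log n)/π + 1 + 1/π`, one has `‖W‖ ≤ 2K_n‖A‖² + ‖A‖`. -/
theorem norm_W_bound (n : ℕ) (hn : 2 ≤ n)
    (A : Matrix (Fin n) (Fin n) ℝ)
    (T : Matrix (Fin n) (Fin n) ℝ)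
    (hT : ∀ i j : Fin n, T i j = if j ≤ i then 1 else 0)
    (hrow : ∀ i, Real.sqrt (∑ j, A i j ^ 2) ≤ ‖A‖)
    (Kn : ℝ)
    (hK : ∀ M : Matrix (Fin n) (Fin n) ℝ, ‖Matrix.hadamard M T‖ ≤ Kn * ‖M‖)
    (hKbound : Kn ≤ Real.log n / Real.pi + 1 + 1 / Real.pi) :
    ‖Matrix.hadamard ((2 : ℝ) • (A * Aᵀ)) T -
        Matrix.diagonal (fun i => ∑ j, A i j ^ 2)‖ ≤
      2 * Kn * ‖A‖ ^ 2 + ‖A‖ := by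
  classical
  set d : Fin n → ℝ := fun i => ∑ j, A i j ^ 2 with hd
  set S : Matrix (Fin n) (Fin n) ℝ := (2 : ℝ) • (A * Aᵀ) - Matrix.diagonal d with hS
  have hd_nonneg : ∀ i, 0 ≤ d i := fun i => Finset.sum_nonneg fun j _ => sq_nonneg _
  have hd_le : ∀ i, d i ≤ ‖A‖ ^ 2 := by
    intro i
    have h := hrow i
    nlinarith [Real.sq_sqrt (hd_nonneg i), Real.sqrt_nonneg (d i), norm_nonneg A]
  -- Step A: W = S ∘ T
  have hsplit : Matrix.hadamard ((2 : ℝ) • (A * Aᵀ)) T - Matrix.diagonal d =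
      Matrix.hadamard S T := by
    ext i j
    simp only [hS, Matrix.sub_apply, Matrix.hadamard_apply, Matrix.diagonal_apply, hT]
    by_cases h2 : i = j
    · subst h2; simp
    · have h3 : ¬ j = i := fun h => h2 h.symm
      by_cases h : j ≤ i <;> simp [h, h2, h3]
  -- Step B: Kn ≥ 0
  have hnz : NeZero n := ⟨by omega⟩
  have h1pos : (0:ℝ) < ‖(1 : Matrix (Fin n) (Fin n) ℝ)‖ :=
    norm_pos_iff.mpr one_ne_zero
  have hKn0 : 0 ≤ Kn := by
    have h := hK 1
    have h0 : (0:ℝ) ≤ ‖Matrix.hadamard (1 : Matrix (Fin n) (Fin n) ℝ) T‖ := norm_nonneg _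
    nlinarith
  -- Step C: ‖S‖ ≤ 2‖A‖²
  have hSnorm : ‖S‖ ≤ 2 * ‖A‖ ^ 2 := by
    rw [Matrix.cstar_norm_def]
    set f := Matrix.toEuclideanCLM (n := Fin n) (𝕜 := ℝ) S with hf
    have hfapp : ∀ (x : EuclideanSpace ℝ (Fin n)) (i : Fin n), f x i = (S *ᵥ x) i :=
      fun x i => rfl
    have hSsymm : ∀ i j, S i j = S j i := by
      intro i j
      simp only [hS, Matrix.sub_apply, Matrix.smul_apply, Matrix.mul_apply,
        Matrix.diagonal_apply, Matrix.transpose_apply, smul_eq_mul]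
      have hsum : ∑ k, A i k * A j k = ∑ k, A j k * A i k :=
        Finset.sum_congr rfl fun k _ => mul_comm _ _
      rw [hsum]
      by_cases h : i = j
      · subst h; rfl
      · simp [h, (Ne.symm h : j ≠ i)]
    have hinner_eq : ∀ x y : EuclideanSpace ℝ (Fin n),
        ⟪f x, y⟫ = ∑ i, ∑ j, S i j * x j * y i := by
      intro x y
      simp only [PiLp.inner_apply, RCLike.inner_apply, conj_trivial, hfapp,
        Matrix.mulVec, dotProduct]
      exact Finset.sum_congr rfl fun i _ => by
        rw [Finset.mul_sum]; exact Finset.sum_congr rfl fun j _ => by ring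
    have hsym : ∀ x y : EuclideanSpace ℝ (Fin n), ⟪f x, y⟫ = ⟪x, f y⟫ := by
      intro x y
      have hcomm : ∑ i, ∑ j, S i j * x j * y i = ∑ j, ∑ i, S i j * x j * y i :=
        Finset.sum_comm
      have hflip : ⟪x, f y⟫ = ∑ i, ∑ j, S i j * y j * x i := by
        rw [real_inner_comm]; exact hinner_eq y x
      rw [hinner_eq x y, hcomm, hflip]
      apply Finset.sum_congr rfl; intro a _
      apply Finset.sum_congr rfl; intro b _
      rw [hSsymm b a]; ring
    apply aux_selfAdjoint_norm_le f hsym (by positivity)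
    intro x
    -- quadratic form computation
    set w : Fin n → ℝ := Aᵀ *ᵥ x with hw
    have hqf : ⟪f x, x⟫ = 2 * (∑ k, (w k) ^ 2) - ∑ i, d i * (x i) ^ 2 := by
      have hSv : ∀ i, (S *ᵥ x) i = 2 * (((A * Aᵀ) *ᵥ x) i) - d i * x i := by
        intro i
        simp [hS, Matrix.sub_mulVec, Matrix.smul_mulVec, Matrix.mulVec_diagonal]
      have h1 : ⟪f x, x⟫ = ∑ i, (S *ᵥ x) i * x i := by
        simp only [PiLp.inner_apply, RCLike.inner_apply, conj_trivial, hfapp]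
        exact Finset.sum_congr rfl fun i _ => mul_comm _ _
      have h2 : ∑ i, ((A * Aᵀ) *ᵥ x) i * x i = ∑ k, (w k) ^ 2 := by
        have hmm : ((A * Aᵀ) *ᵥ x) = A *ᵥ w := by rw [hw, Matrix.mulVec_mulVec]
        rw [hmm]
        have hwk : ∀ k, w k = ∑ i, A i k * x i := by
          intro k
          simp [hw, Matrix.mulVec, dotProduct, Matrix.transpose_apply]
        calc ∑ i, (A *ᵥ w) i * x i
            = ∑ i, ∑ k, A i k * w k * x i := by
              apply Finset.sum_congr rfl; intro i _
              simp only [Matrix.mulVec, dotProduct]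
              rw [Finset.sum_mul]
          _ = ∑ k, ∑ i, A i k * w k * x i := Finset.sum_comm
          _ = ∑ k, (w k) ^ 2 := by
              apply Finset.sum_congr rfl; intro k _
              calc ∑ i, A i k * w k * x i = w k * ∑ i, A i k * x i := by
                    rw [Finset.mul_sum]
                    apply Finset.sum_congr rfl; intro i _; ring
                _ = (w k) ^ 2 := by rw [← hwk k]; ring
      calc ⟪f x, x⟫ = ∑ i, (S *ᵥ x) i * x i := h1
        _ = ∑ i, (2 * (((A * Aᵀ) *ᵥ x) i) * x i - d i * (x i) ^ 2) := by
            apply Finset.sum_congr rfl; intro i _; rw [hSv i]; ring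
        _ = 2 * (∑ i, ((A * Aᵀ) *ᵥ x) i * x i) - ∑ i, d i * (x i) ^ 2 := by
            rw [Finset.sum_sub_distrib, Finset.mul_sum]
            congr 1
            apply Finset.sum_congr rfl; intro i _; ring
        _ = 2 * (∑ k, (w k) ^ 2) - ∑ i, d i * (x i) ^ 2 := by rw [h2]
    -- bounds on the two pieces
    have hxsq : ‖x‖ ^ 2 = ∑ i, (x i) ^ 2 := by
      rw [EuclideanSpace.norm_eq, Real.sq_sqrt (by positivity)]
      apply Finset.sum_congr rfl; intro i _
      rw [Real.norm_eq_abs, sq_abs]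
    have hQ0 : 0 ≤ ∑ k, (w k) ^ 2 := Finset.sum_nonneg fun k _ => sq_nonneg _
    have hR0 : 0 ≤ ∑ i, d i * (x i) ^ 2 :=
      Finset.sum_nonneg fun i _ => mul_nonneg (hd_nonneg i) (sq_nonneg _)
    have hRle : ∑ i, d i * (x i) ^ 2 ≤ ‖A‖ ^ 2 * ‖x‖ ^ 2 := by
      rw [hxsq, Finset.mul_sum]
      apply Finset.sum_le_sum; intro i _
      exact mul_le_mul_of_nonneg_right (hd_le i) (sq_nonneg _)
    have hQle : ∑ k, (w k) ^ 2 ≤ ‖A‖ ^ 2 * ‖x‖ ^ 2 := by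
      have hAT : ‖Aᵀ‖ = ‖A‖ := by
        have hconj : Aᴴ = Aᵀ := by ext i j; simp [Matrix.conjTranspose_apply]
        rw [← hconj, Matrix.l2_opNorm_conjTranspose]
      have hb := Matrix.l2_opNorm_mulVec Aᵀ x
      rw [hAT] at hb
      have hnv : ‖(EuclideanSpace.equiv (Fin n) ℝ).symm (Aᵀ *ᵥ x)‖ ^ 2
          = ∑ k, (w k) ^ 2 := by
        rw [EuclideanSpace.norm_eq, Real.sq_sqrt (by positivity)]
        apply Finset.sum_congr rfl; intro k _
        rw [Real.norm_eq_abs, sq_abs]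
        rfl
      nlinarith [norm_nonneg ((EuclideanSpace.equiv (Fin n) ℝ).symm (Aᵀ *ᵥ x)),
        mul_nonneg (norm_nonneg A) (norm_nonneg x)]
    rw [hqf, abs_le]
    constructor <;> nlinarith
  -- final chain
  calc ‖Matrix.hadamard ((2 : ℝ) • (A * Aᵀ)) T - Matrix.diagonal d‖
      = ‖Matrix.hadamard S T‖ := by rw [hsplit]
    _ ≤ Kn * ‖S‖ := hK S
    _ ≤ Kn * (2 * ‖A‖ ^ 2) := mul_le_mul_of_nonneg_left hSnorm hKn0
    _ ≤ 2 * Kn * ‖A‖ ^ 2 + ‖A‖ := by nlinarith [norm_nonneg A]
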